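/- Let G = (V, w) be a weighted graph, let W = Σ_e w_e be the total edge weight, and let ℓ₃(G) = max over unordered pairs {i,j} of Σ_{s ∉ {i,j}} w_{{i,s}} w_{{j,s}}. Then for all disjoint subsets S, T ⊆ V, the triangle-motif size of the cut satisfies Cut_△(S,T) ≤ W · ℓ₃(G). -/

import Mathlib

open Finset

variable {V : Type*} [Fintype V] [DecidableEq V]

/-- The weight of a 3-element vertex subset: the product of its edge weights. -/
noncomputable def triWeight (w : Sym2 V → ℝ) (t : Finset V) : ℝ :=
  ∏ e ∈ t.sym2.filter fun e => ¬ e.IsDiag, w e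

/-- Triangle-motif size of the cut `(S, T)`: the total weight of the 3-element subsets
meeting both `S` and `T`. -/
noncomputable def cutTri (w : Sym2 V → ℝ) (S T : Finset V) : ℝ :=
  ∑ t ∈ (Finset.univ.powersetCard 3).filter
      (fun t => (t ∩ S).Nonempty ∧ (t ∩ T).Nonempty),
    triWeight w t

/-- Total edge weight: the sum of `w` over unordered pairs of distinct vertices. -/
noncomputable def totalWeight (w : Sym2 V → ℝ) : ℝ :=
  ∑ e ∈ Finset.univ.filter fun e : Sym2 V => ¬ e.IsDiag, w e

/-- Local sensitivity of triangle-motif cuts: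
the maximum over unordered pairs `{i,j}` of `Σ_{s ∉ {i,j}} w_{{i,s}} w_{{j,s}}`. -/
noncomputable def ell3 (w : Sym2 V → ℝ) : ℝ :=
  ⨆ p : V × V,
    if p.1 ≠ p.2 then ∑ s ∈ ({p.1, p.2} : Finset V)ᶜ, w s(p.1, s) * w s(p.2, s) else 0

lemma triWeight_eval (w : Sym2 V → ℝ) {a b c : V} (hab : a ≠ b) (hac : a ≠ c) (hbc : b ≠ c) :
    triWeight w {a, b, c} = w s(a,b) * w s(a,c) * w s(b,c) := by
  unfold triWeight
  have hset : ({a,b,c} : Finset V).sym2.filter (fun e => ¬ e.IsDiag)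
      = {s(a,b), s(a,c), s(b,c)} := by
    ext e
    induction e
    simp only [mem_filter, Finset.mk_mem_sym2_iff, Sym2.isDiag_iff_proj_eq, mem_insert,
      mem_singleton, Sym2.eq_iff]
    aesop
  rw [hset]
  rw [Finset.prod_insert (by simp [Sym2.eq_iff]; tauto),
    Finset.prod_insert (by simp [Sym2.eq_iff]; tauto), Finset.prod_singleton, mul_assoc]

lemma inner_le_ell3 [Nonempty V] (w : Sym2 V → ℝ) {i j : V} (hij : i ≠ j) :
    (∑ s ∈ ({i, j} : Finset V)ᶜ, w s(i, s) * w s(j, s)) ≤ ell3 w := by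
  have h := le_ciSup (f := fun p : V × V =>
      if p.1 ≠ p.2 then ∑ s ∈ ({p.1, p.2} : Finset V)ᶜ, w s(p.1, s) * w s(p.2, s) else 0)
    (Set.Finite.bddAbove (Set.finite_range _)) (i, j)
  refine le_trans ?_ h
  simp [hij]

theorem cutTri_le_totalWeight_mul_ell3 (w : Sym2 V → ℝ) (hw : ∀ e, 0 ≤ w e)
    (S T : Finset V) (hST : Disjoint S T) :
    cutTri w S T ≤ totalWeight w * ell3 w := by
  rcases isEmpty_or_nonempty V with hV | hV
  · haveI : IsEmpty (Sym2 V) := ⟨fun e => e.ind (fun a _ => isEmptyElim a) trivial⟩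
    have h1 : cutTri w S T = 0 := by
      have h0 : (Finset.univ : Finset V).powersetCard 3 = ∅ :=
        Finset.powersetCard_eq_empty.mpr (by simp)
      rw [cutTri, h0, Finset.filter_empty, Finset.sum_empty]
    have h2 : totalWeight w = 0 := by
      simp [totalWeight, Finset.univ_eq_empty (α := Sym2 V)]
    rw [h1, h2, zero_mul]
  · letI : LinearOrder V := LinearOrder.lift' (Fintype.equivFin V) (Fintype.equivFin V).injective
    set A : Finset (Finset V) := Finset.univ.powersetCard 3 with hA
    set E : Finset (Sym2 V) := Finset.univ.filter (fun e : Sym2 V => ¬ e.IsDiag) with hE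
    set B : Finset (Sym2 V × V) :=
      Finset.univ.filter (fun p : Sym2 V × V => ¬ p.1.IsDiag ∧ p.2 ∉ p.1) with hB
    have hsym : ∀ i j s : V, w s(i, s) * w s(j, s) = w s(j, s) * w s(i, s) :=
      fun _ _ _ => mul_comm _ _
    set G : Sym2 V × V → ℝ := fun p =>
      w p.1 * Sym2.lift ⟨fun i j => w s(i, p.2) * w s(j, p.2), fun i j => hsym i j p.2⟩ p.1
      with hG
    have hGnonneg : ∀ p : Sym2 V × V, 0 ≤ G p := by
      rintro ⟨e, s⟩
      refine mul_nonneg (hw _) ?_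
      induction e
      rw [Sym2.lift_mk]
      exact mul_nonneg (hw _) (hw _)
    set d : V := Classical.arbitrary V with hd
    set σ : Finset V → Sym2 V × V := fun t =>
      (s((t.sort (· ≤ ·)).getD 1 d, (t.sort (· ≤ ·)).getD 2 d), (t.sort (· ≤ ·)).getD 0 d)
      with hσ
    have key : ∀ t ∈ A, ∃ a b c : V, t.sort (· ≤ ·) = [a, b, c] ∧
        a ≠ b ∧ a ≠ c ∧ b ≠ c ∧ t = {a, b, c} := by
      intro t ht
      have hlen : (t.sort (· ≤ ·)).length = 3 := by
        rw [Finset.length_sort]; exact Finset.mem_powersetCard_univ.mp ht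
      obtain ⟨a, b, c, habc⟩ := List.length_eq_three.mp hlen
      have hnd : (t.sort (· ≤ ·)).Nodup := Finset.sort_nodup t _
      rw [habc] at hnd
      simp only [List.nodup_cons, List.mem_cons, List.mem_singleton, List.not_mem_nil,
        not_or, List.nodup_nil, and_true] at hnd
      have ht' : t = {a, b, c} := by
        have h := Finset.sort_toFinset t (· ≤ ·)
        rw [habc] at h
        rw [← h]
        simp
      refine ⟨a, b, c, habc, ?_, ?_, ?_, ht'⟩ <;> tauto
    have hσmem : ∀ t ∈ A, σ t ∈ B := by
      intro t ht
      obtain ⟨a, b, c, habc, hab, hac, hbc, -⟩ := key t ht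
      have e1 : σ t = (s(b, c), a) := by simp [hσ, habc]
      rw [e1, hB, Finset.mem_filter]
      refine ⟨Finset.mem_univ _, ?_⟩
      simp [Sym2.mem_iff, hbc, hab, hac]
    have hσval : ∀ t ∈ A, triWeight w t = G (σ t) := by
      intro t ht
      obtain ⟨a, b, c, habc, hab, hac, hbc, ht'⟩ := key t ht
      have e1 : σ t = (s(b, c), a) := by simp [hσ, habc]
      rw [e1, ht', triWeight_eval w hab hac hbc]
      simp only [hG]
      rw [Sym2.lift_mk]
      show w s(a,b) * w s(a,c) * w s(b,c) = w s(b,c) * (w s(b,a) * w s(c,a))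
      rw [show s(b, a) = s(a, b) from Sym2.eq_swap, show s(c, a) = s(a, c) from Sym2.eq_swap]
      ring
    have hinj : ∀ t ∈ A, ∀ t' ∈ A, σ t = σ t' → t = t' := by
      intro t ht t' ht' heq
      obtain ⟨a, b, c, habc, hab, hac, hbc, h1⟩ := key t ht
      obtain ⟨a', b', c', habc', hab', hac', hbc', h1'⟩ := key t' ht'
      have e1 : σ t = (s(b, c), a) := by simp [hσ, habc]
      have e2 : σ t' = (s(b', c'), a') := by simp [hσ, habc']
      rw [e1, e2, Prod.mk.injEq, Sym2.eq_iff] at heq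
      rcases heq with ⟨(⟨rfl, rfl⟩ | ⟨rfl, rfl⟩), rfl⟩
      · rw [h1, h1']
      · rw [h1, h1']; ext x; simp; tauto
    have step1 : cutTri w S T ≤ ∑ t ∈ A, triWeight w t := by
      refine Finset.sum_le_sum_of_subset_of_nonneg (Finset.filter_subset _ _) ?_
      intro t _ _
      exact Finset.prod_nonneg fun e _ => hw e
    have step2 : ∑ t ∈ A, triWeight w t = ∑ p ∈ A.image σ, G p := by
      rw [Finset.sum_image hinj]
      exact Finset.sum_congr rfl hσval
    have step3 : ∑ p ∈ A.image σ, G p ≤ ∑ p ∈ B, G p := by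
      refine Finset.sum_le_sum_of_subset_of_nonneg ?_ (fun p _ _ => hGnonneg p)
      intro p hp
      obtain ⟨t, ht, rfl⟩ := Finset.mem_image.mp hp
      exact hσmem t ht
    have step4 : ∑ p ∈ B, G p = ∑ e ∈ E, ∑ s ∈ Finset.univ.filter (fun s => s ∉ e), G (e, s) := by
      refine Finset.sum_finset_product B E _ ?_
      rintro ⟨e, s⟩
      simp [hB, hE]
    have step5 : ∀ e ∈ E, (∑ s ∈ Finset.univ.filter (fun s => s ∉ e), G (e, s)) ≤ w e * ell3 w := by
      intro e he
      induction e with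
      | _ i j =>
        have hij : i ≠ j := by
          rw [hE, Finset.mem_filter] at he
          simpa [Sym2.isDiag_iff_proj_eq] using he.2
        have hfil : Finset.univ.filter (fun s => s ∉ s(i, j)) = ({i, j} : Finset V)ᶜ := by
          ext s
          simp [Sym2.mem_iff]
        rw [hfil]
        have hGval : ∀ s : V, G (s(i, j), s) = w s(i, j) * (w s(i, s) * w s(j, s)) := by
          intro s
          simp only [hG]
          rw [Sym2.lift_mk]
        calc (∑ s ∈ ({i, j} : Finset V)ᶜ, G (s(i, j), s))
            = w s(i, j) * ∑ s ∈ ({i, j} : Finset V)ᶜ, w s(i, s) * w s(j, s) := by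
              rw [Finset.mul_sum]; exact Finset.sum_congr rfl fun s _ => hGval s
          _ ≤ w s(i, j) * ell3 w :=
              mul_le_mul_of_nonneg_left (inner_le_ell3 w hij) (hw _)
    calc cutTri w S T ≤ ∑ p ∈ B, G p := by
          rw [← step4] at *; linarith [step1, step2.le, step3]
      _ ≤ ∑ e ∈ E, w e * ell3 w := by rw [step4]; exact Finset.sum_le_sum step5
      _ = totalWeight w * ell3 w := by rw [← Finset.sum_mul]; rfl
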